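/- arXiv:1609.07206 — 2 statements merged into one kernel-verified Lean document; each statement's English description precedes it below -/
import Mathlib

section
/- Let x ∈ 𝔻. If the record time trimmer R_trim is J1-continuous at x, i.e. for every sequence x_n ∈ 𝔻 converging to x in the J1-topology the sequence R_trim(x_n) converges to R_trim(x) in the J1-topology, then #A⁺₁(x) ≤ 1, i.e. the set A⁺₁(x) of times of the largest positive jump of x on (0,1] has at most one element. -/
open Filter Topology Set unitInterval

noncomputable section

open scoped Classical

instance : Fact ((0:ℝ) ≤ 1) := ⟨zero_le_one⟩

/-- The space `𝔻` of càdlàg functions on `[0,1]`: right-continuous everywhere with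
finite left limits everywhere (conditions at the endpoints hold vacuously). -/
def Cadlag (x : I → ℝ) : Prop :=
  (∀ τ : I, Tendsto x (𝓝[>] τ) (𝓝 (x τ))) ∧ (∀ τ : I, ∃ l : ℝ, Tendsto x (𝓝[<] τ) (𝓝 l))

/-- The sup-norm `‖x‖ = sup_{0 ≤ τ ≤ 1} |x(τ)|`. -/
def dNorm (x : I → ℝ) : ℝ := ⨆ τ : I, |x τ|

/-- The jump `Δx(τ) = x(τ) - x(τ-)` of `x` at `τ`, with `Δx(0) := 0`. -/
def jump (x : I → ℝ) (τ : I) : ℝ := if τ = 0 then 0 else x τ - Function.leftLim x τ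

/-- The running supremum `S(x)(τ) = sup_{0 ≤ s ≤ τ} x(s)`. -/
def runSup (x : I → ℝ) (τ : I) : ℝ := sSup (x '' {s : I | s ≤ τ})

/-- The running absolute supremum `S̃(x)(τ) = sup_{0 ≤ s ≤ τ} |x(s)|`. -/
def runAbsSup (x : I → ℝ) (τ : I) : ℝ := sSup ((fun s => |x s|) '' {s : I | s ≤ τ})

/-- The largest positive jump `S_{+Δ}(x)(τ) = sup_{0 ≤ s ≤ τ} Δx(s)`. -/
def posJumpSup (x : I → ℝ) (τ : I) : ℝ := sSup (jump x '' {s : I | s ≤ τ})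

/-- The largest modulus jump `S̃_Δ(x)(τ) = sup_{0 ≤ s ≤ τ} |Δx(s)|`. -/
def modJumpSup (x : I → ℝ) (τ : I) : ℝ := sSup ((fun s => |jump x s|) '' {s : I | s ≤ τ})

/-- The first extremal positive trimming ("trim as you go") operator
`T^{(1,+)}_{rim}(x) = x - S_{+Δ}(x)`. -/
def trimPos (x : I → ℝ) : I → ℝ := fun τ => x τ - posJumpSup x τ

/-- `Λ`: continuous strictly increasing bijections of `[0,1]` fixing the endpoints. -/
def IsTimeChange (l : I → I) : Prop := Continuous l ∧ StrictMono l ∧ l 0 = 0 ∧ l 1 = 1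

/-- Convergence in the (strong) Skorokhod `J₁`-topology. -/
def J1Tendsto (xn : ℕ → I → ℝ) (x : I → ℝ) : Prop :=
  ∃ l : ℕ → I → I, (∀ n, IsTimeChange (l n)) ∧
    Tendsto (fun n => dNorm (fun τ => (l n τ : ℝ) - (τ : ℝ))) atTop (𝓝 0) ∧
    Tendsto (fun n => dNorm (fun τ => xn n (l n τ) - x τ)) atTop (𝓝 0)

/-- `Ã_τ(x)`: the times `s ∈ (0,τ]` of the largest modulus jump of `x` on `[0,τ]`
(empty when `S̃_Δ(x)(τ) = 0`). -/
def tildeA (x : I → ℝ) (τ : I) : Set I :=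
  {s : I | 0 < s ∧ s ≤ τ ∧ 0 < |jump x s| ∧ |jump x s| = modJumpSup x τ}

/-- `A⁺_τ(x)`: the times `s ∈ (0,τ]` of the largest positive jump of `x` on `[0,τ]`
(empty when `S_{+Δ}(x)(τ) = 0`). -/
def posA (x : I → ℝ) (τ : I) : Set I :=
  {s : I | 0 < s ∧ s ≤ τ ∧ 0 < jump x s ∧ jump x s = posJumpSup x τ}

/-- The signed largest-modulus ("trim as you go") trimmer `𝔗_rim`:
`𝔗_rim(x)(τ) = x(τ) - Δx(L̃_τ(x))` if `Ã_τ(x) ≠ ∅`, `x(τ)` otherwise, where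
`L̃_τ(x) = max Ã_τ(x)`. -/
def sgnModTrim (x : I → ℝ) : I → ℝ := fun τ =>
  if (tildeA x τ).Nonempty then x τ - jump x (sSup (tildeA x τ)) else x τ

/-- The record time ("lookback") trimmer:
`R_trim(x) = x - Δx(R₁(x))·1_{[R₁(x),1]}` if `A⁺₁(x) ≠ ∅`, `x` otherwise, where
`R₁(x) = min A⁺₁(x)`. -/
def recordTrim (x : I → ℝ) : I → ℝ := fun τ =>
  if (posA x 1).Nonempty ∧ sInf (posA x 1) ≤ τ then x τ - jump x (sInf (posA x 1)) else x τ

/-- The modulus record time trimmer: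
`R̃_trim(x) = x - Δx(R̃₁(x))·1_{[R̃₁(x),1]}` if `Ã₁(x) ≠ ∅`, `x` otherwise, where
`R̃₁(x) = min Ã₁(x)`. -/
def modRecordTrim (x : I → ℝ) : I → ℝ := fun τ =>
  if (tildeA x 1).Nonempty ∧ sInf (tildeA x 1) ≤ τ then x τ - jump x (sInf (tildeA x 1)) else x τ


lemma cadlag_bounded {x : I → ℝ} (hx : Cadlag x) : ∃ M : ℝ, ∀ τ : I, |x τ| ≤ M := by
  by_contra hb
  push_neg at hb
  have hbk : ∀ k : ℕ, ∃ τ : I, (k : ℝ) < |x τ| := fun k => hb k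
  choose u hu using hbk
  obtain ⟨τ0, -, φ, hφ, hconv⟩ := isCompact_univ.tendsto_subseq (fun k => mem_univ (u k))
  obtain ⟨L, hL⟩ := hx.2 τ0
  have h1 : ∀ᶠ v in 𝓝[<] τ0, |x v| ≤ |L| + 1 :=
    hL.abs.eventually (eventually_le_nhds (lt_add_one |L|))
  have hr : Tendsto x (𝓝[≥] τ0) (𝓝 (x τ0)) := by
    rw [← Set.Ioi_insert, nhdsWithin_insert]
    exact Tendsto.sup (tendsto_pure_nhds x τ0) (hx.1 τ0)
  have h2 : ∀ᶠ v in 𝓝[≥] τ0, |x v| ≤ |x τ0| + 1 :=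
    hr.abs.eventually (eventually_le_nhds (lt_add_one |x τ0|))
  have h3 : ∀ᶠ v in 𝓝 τ0, |x v| ≤ max (|L| + 1) (|x τ0| + 1) := by
    rw [← nhdsLT_sup_nhdsGE τ0, eventually_sup]
    exact ⟨h1.mono fun v hv => le_max_of_le_left hv, h2.mono fun v hv => le_max_of_le_right hv⟩
  have h4 := hconv.eventually h3
  have h5 : ∀ᶠ k : ℕ in atTop, max (|L| + 1) (|x τ0| + 1) < (k : ℝ) :=
    (tendsto_natCast_atTop_atTop (R := ℝ)).eventually_gt_atTop _
  obtain ⟨k, hk1, hk2⟩ := (h4.and h5).exists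
  have hk3 : (k : ℝ) ≤ (φ k : ℝ) := Nat.cast_le.2 hφ.le_apply
  have hk4 := hu (φ k)
  simp only [Function.comp] at hk1
  linarith

lemma abs_le_dNorm {f : I → ℝ} {M : ℝ} (hb : ∀ τ, |f τ| ≤ M) (τ : I) : |f τ| ≤ dNorm f :=
  le_ciSup ⟨M, fun y hy => by obtain ⟨s1, rfl⟩ := hy; exact hb s1⟩ τ

lemma approach {f : I → ℝ} {τ : I} {B : ℝ}
    (hr : Tendsto f (𝓝[>] τ) (𝓝 (f τ)))
    (hlf : Tendsto f (𝓝[<] τ) (𝓝 B))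
    {u : ℕ → I} (hu : Tendsto u atTop (𝓝 τ))
    {w : ℝ} (hw : Tendsto (fun n => f (u n)) atTop (𝓝 w)) :
    w = f τ ∨ w = B := by
  have key : ∀ ε : ℝ, 0 < ε → |w - f τ| < 2 * ε ∨ |w - B| < 2 * ε := by
    intro ε hε
    have hr' : Tendsto f (𝓝[≥] τ) (𝓝 (f τ)) := by
      rw [← Set.Ioi_insert, nhdsWithin_insert]
      exact Tendsto.sup (tendsto_pure_nhds f τ) hr
    have hU : ∀ᶠ v in 𝓝 τ, v ∈ Ici τ → |f v - f τ| < ε := by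
      have := Metric.tendsto_nhds.mp hr' ε hε
      rw [eventually_nhdsWithin_iff] at this
      exact this.mono fun v hv h' => by simpa [Real.dist_eq] using hv h'
    have hV : ∀ᶠ v in 𝓝 τ, v ∈ Iio τ → |f v - B| < ε := by
      have := Metric.tendsto_nhds.mp hlf ε hε
      rw [eventually_nhdsWithin_iff] at this
      exact this.mono fun v hv h' => by simpa [Real.dist_eq] using hv h'
    have hn1 := hu.eventually (hU.and hV)
    have hn2 := Metric.tendsto_nhds.mp hw ε hε
    obtain ⟨n, ⟨hnU, hnV⟩, hnw⟩ := (hn1.and hn2).exists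
    rw [Real.dist_eq] at hnw
    rcases lt_or_ge (u n) τ with hlt | hge
    · right
      have h' := hnV hlt
      have : |w - B| ≤ |w - f (u n)| + |f (u n) - B| := abs_sub_le _ _ _
      have h'' : |w - f (u n)| = |f (u n) - w| := abs_sub_comm _ _
      linarith
    · left
      have h' := hnU hge
      have : |w - f τ| ≤ |w - f (u n)| + |f (u n) - f τ| := abs_sub_le _ _ _
      have h'' : |w - f (u n)| = |f (u n) - w| := abs_sub_comm _ _
      linarith
  by_contra hcon
  push_neg at hcon
  obtain ⟨h1, h2⟩ := hcon
  have hε : 0 < min |w - f τ| |w - B| / 2 :=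
    div_pos (lt_min (abs_pos.2 (sub_ne_zero.2 h1)) (abs_pos.2 (sub_ne_zero.2 h2))) two_pos
  rcases key _ hε with h3 | h3
  · have := min_le_left |w - f τ| |w - B|
    linarith
  · have := min_le_right |w - f τ| |w - B|
    linarith

lemma jump_const_zero {x : I → ℝ} (hx : Cadlag x) {a b : I} (hab : a < b) {c : ℝ}
    (hc : ∀ τ : I, a < τ → τ < b → jump x τ = c) : c = 0 := by
  obtain ⟨τ0, haτ0, hτ0b⟩ := exists_between hab
  haveI : NeBot (𝓝[<] τ0) := nhdsWithin_Iio_self_neBot' ⟨a, haτ0⟩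
  obtain ⟨L, hL⟩ := hx.2 τ0
  have key : ∀ ε : ℝ, 0 < ε → |c| < 2 * ε := by
    intro ε hε
    have hev : {v : I | |x v - L| < ε} ∈ 𝓝[<] τ0 := by
      have := Metric.tendsto_nhds.mp hL ε hε
      simp only [Real.dist_eq] at this
      exact this
    obtain ⟨v, hvτ0, hvsub⟩ := (mem_nhdsLT_iff_exists_Ioo_subset' haτ0).1 hev
    have hv'τ0 : max v a < τ0 := max_lt hvτ0 haτ0
    obtain ⟨τ, hv'τ, hττ0⟩ := exists_between hv'τ0
    have haτ : a < τ := lt_of_le_of_lt (le_max_right v a) hv'τ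
    have hτb : τ < b := lt_trans hττ0 hτ0b
    have hvτ : v < τ := lt_of_le_of_lt (le_max_left v a) hv'τ
    have hxτ : |x τ - L| < ε := hvsub ⟨hvτ, hττ0⟩
    haveI : NeBot (𝓝[<] τ) := nhdsWithin_Iio_self_neBot' ⟨max v a, hv'τ⟩
    obtain ⟨Lτ, hLτ⟩ := hx.2 τ
    have hll : Function.leftLim x τ = Lτ :=
      leftLim_eq_of_tendsto (h := nhdsWithin_Iio_self_neBot' ⟨max v a, hv'τ⟩) hLτ
    have hLτL : |Lτ - L| ≤ ε := by
      apply le_of_tendsto ((hLτ.sub_const L).abs)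
      filter_upwards [Ioo_mem_nhdsLT hv'τ] with w hw
      exact le_of_lt (hvsub ⟨lt_of_le_of_lt (le_max_left v a) hw.1, lt_trans hw.2 hττ0⟩)
    have hτ0' : (0:I) < τ := lt_of_le_of_lt nonneg' haτ
    have hjτ : jump x τ = x τ - Lτ := by rw [jump, if_neg hτ0'.ne', hll]
    have := hc τ haτ hτb
    rw [hjτ] at this
    have habs : |c| = |x τ - Lτ| := by rw [← this]
    have h3 : |x τ - Lτ| ≤ |x τ - L| + |L - Lτ| := abs_sub_le _ _ _
    have h4 : |L - Lτ| = |Lτ - L| := abs_sub_comm _ _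
    linarith
  by_contra hc0
  have := key (|c| / 2) (by positivity)
  linarith

lemma not_two (x : I → ℝ) (hx : Cadlag x)
    (hcont : ∀ xn : ℕ → I → ℝ, (∀ n, Cadlag (xn n)) → J1Tendsto xn x →
      J1Tendsto (fun n => recordTrim (xn n)) (recordTrim x))
    {s t : I} (hs : s ∈ posA x 1) (ht : t ∈ posA x 1) (hst : s < t) : False := by
  obtain ⟨hs0, -, hsp, hseq⟩ := hs
  obtain ⟨ht0, -, htp, hteq⟩ := ht
  obtain ⟨M, hM⟩ := cadlag_bounded hx
  set h : ℝ := posJumpSup x 1 with hh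
  have hhpos : 0 < h := hteq ▸ htp
  have hjt : jump x t = h := hteq
  have hble : ∀ u : I, jump x u ≤ h := by
    have hBdd : BddAbove (jump x '' {s : I | s ≤ 1}) := by
      by_contra hb
      have h0 : h = 0 := by rw [hh, posJumpSup, Real.sSup_of_not_bddAbove hb]
      linarith
    intro u
    exact le_csSup hBdd ⟨u, le_one', rfl⟩
  -- the indicator of [t,1]
  set ind : I → ℝ := fun v => if t ≤ v then 1 else 0 with hind
  have hind01 : ∀ v, 0 ≤ ind v ∧ ind v ≤ 1 := by
    intro v; by_cases h' : t ≤ v <;> simp [hind, h']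
  have hind_right : ∀ v : I, Tendsto ind (𝓝[>] v) (𝓝 (ind v)) := by
    intro v
    rcases le_or_gt t v with hc | hc
    · have hEq : (fun _ : I => ind v) =ᶠ[𝓝[>] v] ind := by
        filter_upwards [self_mem_nhdsWithin] with w hw
        simp [hind, hc, hc.trans (le_of_lt (mem_Ioi.1 hw))]
      exact Tendsto.congr' hEq tendsto_const_nhds
    · have hEq : (fun _ : I => ind v) =ᶠ[𝓝[>] v] ind := by
        filter_upwards [mem_nhdsWithin_of_mem_nhds (isOpen_Iio.mem_nhds hc)] with w hw
        simp [hind, not_le.2 hc, not_le.2 (mem_Iio.1 hw)]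
      exact Tendsto.congr' hEq tendsto_const_nhds
  have hind_left : ∀ v : I, Tendsto ind (𝓝[<] v) (𝓝 (if t < v then 1 else 0)) := by
    intro v
    rcases lt_or_ge t v with hc | hc
    · have hEq : (fun _ : I => (1:ℝ)) =ᶠ[𝓝[<] v] ind := by
        filter_upwards [mem_nhdsWithin_of_mem_nhds (isOpen_Ioi.mem_nhds hc)] with w hw
        simp [hind, le_of_lt (mem_Ioi.1 hw)]
      rw [if_pos hc]
      exact Tendsto.congr' hEq tendsto_const_nhds
    · have hEq : (fun _ : I => (0:ℝ)) =ᶠ[𝓝[<] v] ind := by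
        filter_upwards [self_mem_nhdsWithin] with w hw
        simp [hind, not_le.2 (lt_of_lt_of_le (mem_Iio.1 hw) hc)]
      rw [if_neg (not_lt.2 hc)]
      exact Tendsto.congr' hEq tendsto_const_nhds
  -- the perturbed sequence
  set e : ℕ → ℝ := fun n => 1 / (n + 1) with he
  have he_pos : ∀ n, 0 < e n := by
    intro n; rw [he]; positivity
  have he0 : Tendsto e atTop (𝓝 0) := tendsto_one_div_add_atTop_nhds_zero_nat
  set xn : ℕ → I → ℝ := fun n v => x v + e n * ind v with hxn
  have hxn_cadlag : ∀ n, Cadlag (xn n) := by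
    intro n
    constructor
    · intro τ; exact (hx.1 τ).add ((hind_right τ).const_mul _)
    · intro τ
      obtain ⟨L, hL⟩ := hx.2 τ
      exact ⟨L + e n * (if t < τ then 1 else 0), hL.add ((hind_left τ).const_mul _)⟩
  have hJ1 : J1Tendsto xn x := by
    refine ⟨fun _ => id, fun n => ⟨continuous_id, strictMono_id, rfl, rfl⟩, ?_, ?_⟩
    · simp only [id_eq, sub_self]
      have hd0 : dNorm (fun _ : I => (0:ℝ)) = 0 := by rw [dNorm]; simp
      simp only [hd0]
      exact tendsto_const_nhds
    · apply squeeze_zero (fun n => Real.iSup_nonneg fun τ => abs_nonneg _) (fun n => ?_) he0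
      apply Real.iSup_le _ (le_of_lt (he_pos n))
      intro τ
      have h1 : xn n (id τ) - x τ = e n * ind τ := by simp [hxn]
      rw [h1, abs_of_nonneg (mul_nonneg (he_pos n).le (hind01 τ).1)]
      calc e n * ind τ ≤ e n * 1 := mul_le_mul_of_nonneg_left (hind01 τ).2 (he_pos n).le
        _ = e n := mul_one _
  obtain ⟨l, hltc, hlid, hldist⟩ := hcont xn hxn_cadlag hJ1
  have hleftLim : ∀ (f : I → ℝ) (u : I), 0 < u → ∀ L : ℝ,
      Tendsto f (𝓝[<] u) (𝓝 L) → Function.leftLim f u = L := by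
    intro f u hu L hL
    have hne : NeBot (𝓝[<] u) := nhdsWithin_Iio_self_neBot' (b := u) ⟨0, hu⟩
    exact leftLim_eq_of_tendsto (h := hne) hL
  have hjump_xn : ∀ n, ∀ u : I, jump (xn n) u = jump x u + e n * (if u = t then 1 else 0) := by
    intro n u
    rcases eq_or_ne u 0 with rfl | hu0
    · simp [jump, ht0.ne]
    · have hu0' : (0:I) < u := lt_of_le_of_ne nonneg' (Ne.symm hu0)
      obtain ⟨L, hL⟩ := hx.2 u
      have hx_ll : Function.leftLim x u = L := hleftLim x u hu0' L hL
      have hxn_t : Tendsto (xn n) (𝓝[<] u) (𝓝 (L + e n * (if t < u then 1 else 0))) :=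
        hL.add ((hind_left u).const_mul _)
      have hxn_ll := hleftLim (xn n) u hu0' _ hxn_t
      rw [jump, jump, if_neg hu0, if_neg hu0, hxn_ll, hx_ll]
      have hkey : ind u - (if t < u then 1 else 0) = (if u = t then 1 else 0) := by
        rcases lt_trichotomy u t with hc | rfl | hc
        · simp [hind, not_le.2 hc, not_lt.2 hc.le, hc.ne]
        · simp [hind]
        · simp [hind, hc.le, hc, hc.ne']
      have : xn n u = x u + e n * ind u := by simp [hxn]
      rw [this, ← hkey]
      ring
  have hpj_xn : ∀ n, posJumpSup (xn n) 1 = h + e n := by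
    intro n
    rw [posJumpSup]
    apply IsGreatest.csSup_eq
    constructor
    · exact ⟨t, le_one', by rw [hjump_xn n t, hjt, if_pos rfl, mul_one]⟩
    · rintro w ⟨u, -, rfl⟩
      rw [hjump_xn n u]
      rcases eq_or_ne u t with rfl | hne
      · rw [hjt, if_pos rfl, mul_one]
      · rw [if_neg hne, mul_zero, add_zero]
        exact (hble u).trans (le_add_of_nonneg_right (he_pos n).le)
  have hposA_xn : ∀ n, posA (xn n) 1 = {t} := by
    intro n
    ext u
    simp only [posA, mem_setOf_eq, mem_singleton_iff]
    constructor
    · rintro ⟨hu0, -, hup, hueq⟩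
      by_contra hne
      rw [hjump_xn n u, if_neg hne, mul_zero, add_zero, hpj_xn n] at hueq
      have h1 := hble u
      have h2 := he_pos n
      linarith
    · intro hu
      rw [hu]
      refine ⟨ht0, le_one', ?_, ?_⟩
      · rw [hjump_xn n t, if_pos rfl, mul_one, hjt]
        have := he_pos n; linarith
      · rw [hjump_xn n t, if_pos rfl, mul_one, hjt, hpj_xn n]
  set y : I → ℝ := fun τ => x τ - h * ind τ with hy
  have hrt_xn : ∀ n, recordTrim (xn n) = y := by
    intro n
    funext τ
    simp only [recordTrim, hposA_xn n, sInf_singleton]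
    rcases le_or_gt t τ with hc | hc
    · rw [if_pos ⟨singleton_nonempty t, hc⟩, hjump_xn n t, if_pos rfl, mul_one, hjt, hy]
      have h1 : xn n τ = x τ + e n * ind τ := by simp [hxn]
      have h2 : ind τ = 1 := by simp [hind, hc]
      simp only [h1, h2, hy]; ring
    · rw [if_neg (by rintro ⟨-, hle⟩; exact absurd hle (not_le.2 hc))]
      have h1 : xn n τ = x τ + e n * ind τ := by simp [hxn]
      have h2 : ind τ = 0 := by simp [hind, not_le.2 hc]
      simp only [h1, h2, hy]; ring
  set z : I → ℝ := recordTrim x with hz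
  have hApos : (posA x 1).Nonempty := ⟨t, ht0, le_one', htp, hteq⟩
  set r : I := sInf (posA x 1) with hr
  set c : ℝ := jump x r with hc
  have hrs : r ≤ s := sInf_le ⟨hs0, le_one', hsp, hseq⟩
  have hzeval : ∀ τ : I, r ≤ τ → z τ = x τ - c := by
    intro τ hτ
    rw [hz]
    simp only [recordTrim]
    rw [if_pos ⟨hApos, hτ⟩]
  -- bounds
  have hy_bound : ∀ v : I, |y v| ≤ M + h := by
    intro v
    have h1 : |h * ind v| ≤ h := by
      rw [abs_of_nonneg (mul_nonneg hhpos.le (hind01 v).1)]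
      calc h * ind v ≤ h * 1 := mul_le_mul_of_nonneg_left (hind01 v).2 hhpos.le
        _ = h := mul_one h
    have h2 := hM v
    have h3 : |y v| ≤ |x v| + |h * ind v| := by rw [hy]; exact abs_sub _ _
    linarith
  have hz_bound : ∀ v : I, |z v| ≤ M + |c| := by
    intro v
    rw [hz]
    simp only [recordTrim]
    split_ifs with h'
    · have h3 : |x v - jump x (sInf (posA x 1))| ≤ |x v| + |jump x (sInf (posA x 1))| :=
        abs_sub _ _
      have h4 : jump x (sInf (posA x 1)) = c := by rw [hc, hr]
      rw [h4] at h3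
      have := hM v
      linarith
    · have := hM v
      have : |x v| ≤ M + |c| := le_add_of_le_of_nonneg this (abs_nonneg c)
      exact this
  have hl_to : ∀ τ0 : I, Tendsto (fun n => l n τ0) atTop (𝓝 τ0) := by
    intro τ0
    rw [tendsto_subtype_rng]
    rw [tendsto_iff_dist_tendsto_zero]
    apply squeeze_zero (fun n => dist_nonneg) (fun n => ?_) hlid
    rw [Real.dist_eq]
    apply abs_le_dNorm (M := 1) _ τ0
    intro τ
    rw [abs_sub_le_iff]
    constructor
    · have := (l n τ).2.2; have := τ.2.1; linarith
    · have := (l n τ).2.1; have := τ.2.2; linarith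
  have hy_to : ∀ τ0 : I, Tendsto (fun n => y (l n τ0)) atTop (𝓝 (z τ0)) := by
    intro τ0
    rw [tendsto_iff_dist_tendsto_zero]
    apply squeeze_zero (fun n => dist_nonneg) (fun n => ?_) hldist
    rw [Real.dist_eq]
    have hb : ∀ τ : I, |recordTrim (xn n) (l n τ) - recordTrim x τ| ≤ (M + h) + (M + |c|) := by
      intro τ
      rw [hrt_xn n, ← hz]
      have h3 : |y (l n τ) - z τ| ≤ |y (l n τ)| + |z τ| := abs_sub _ _
      have h4 := hy_bound (l n τ)
      have h5 := hz_bound τ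
      linarith
    have h6 := abs_le_dNorm hb τ0
    rw [show y = recordTrim (xn n) from (hrt_xn n).symm]
    exact h6
  -- evaluation at t : c = h
  have hy_t : y t = x t - h := by rw [hy]; simp [hind]
  have hyr_t : Tendsto y (𝓝[>] t) (𝓝 (y t)) := by
    have hxt : Tendsto (fun v => x v - h) (𝓝[>] t) (𝓝 (x t - h)) := (hx.1 t).sub_const h
    rw [hy_t]
    apply Tendsto.congr' _ hxt
    filter_upwards [self_mem_nhdsWithin] with w hw
    simp [hy, hind, le_of_lt (mem_Ioi.1 hw)]
  obtain ⟨Lt, hLt⟩ := hx.2 t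
  have hLt_val : Lt = x t - h := by
    have h1 : Function.leftLim x t = Lt := hleftLim x t ht0 Lt hLt
    have h2 : jump x t = x t - Function.leftLim x t := by rw [jump, if_neg ht0.ne']
    rw [h1, hjt] at h2
    linarith
  have hyl_t : Tendsto y (𝓝[<] t) (𝓝 (x t - h)) := by
    rw [← hLt_val]
    apply Tendsto.congr' _ hLt
    filter_upwards [self_mem_nhdsWithin] with w hw
    simp [hy, hind, not_le.2 (mem_Iio.1 hw)]
  have hch : c = h := by
    have h1 := hzeval t (hrs.trans hst.le)
    rcases approach hyr_t hyl_t (hl_to t) (hy_to t) with h2 | h2 <;>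
      rw [h1] at h2
    · rw [hy_t] at h2; linarith
    · linarith
  -- evaluation on (s,t) : jump x τ0 = c for all τ0 ∈ (s,t)
  have hjc : ∀ τ0 : I, s < τ0 → τ0 < t → jump x τ0 = c := by
    intro τ0 h1 h2
    have hτ00 : (0:I) < τ0 := lt_trans hs0 h1
    obtain ⟨L0, hL0⟩ := hx.2 τ0
    have hll0 : Function.leftLim x τ0 = L0 := hleftLim x τ0 hτ00 L0 hL0
    have hyτ0 : y τ0 = x τ0 := by simp [hy, hind, not_le.2 h2]
    have hyr : Tendsto y (𝓝[>] τ0) (𝓝 (y τ0)) := by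
      rw [hyτ0]
      apply Tendsto.congr' _ (hx.1 τ0)
      filter_upwards [mem_nhdsWithin_of_mem_nhds (isOpen_Iio.mem_nhds h2)] with w hw
      simp [hy, hind, not_le.2 (mem_Iio.1 hw)]
    have hyl' : Tendsto y (𝓝[<] τ0) (𝓝 L0) := by
      apply Tendsto.congr' _ hL0
      filter_upwards [mem_nhdsWithin_of_mem_nhds (isOpen_Iio.mem_nhds h2)] with w hw
      simp [hy, hind, not_le.2 (mem_Iio.1 hw)]
    have happ := approach hyr hyl' (hl_to τ0) (hy_to τ0)
    have hzτ := hzeval τ0 (le_trans hrs (le_of_lt h1))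
    rcases happ with h3 | h3
    · exfalso
      rw [hzτ, hyτ0] at h3
      have hc0 : c = 0 := by linarith
      rw [hch] at hc0
      linarith
    · rw [hzτ] at h3
      rw [jump, if_neg hτ00.ne', hll0]
      linarith
  have hfin := jump_const_zero hx hst hjc
  rw [hch] at hfin
  linarith

/-- if the record time trimmer `R_trim` is `J₁`-continuous at `x ∈ 𝔻`,
then `#A⁺₁(x) ≤ 1`. -/
theorem stmt12 (x : I → ℝ) (hx : Cadlag x)
    (hcont : ∀ xn : ℕ → I → ℝ, (∀ n, Cadlag (xn n)) → J1Tendsto xn x →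
      J1Tendsto (fun n => recordTrim (xn n)) (recordTrim x)) :
    (posA x 1).Subsingleton := by
  intro p hp q hq
  rcases lt_trichotomy p q with hlt | heq | hlt
  · exact (not_two x hx hcont hp hq hlt).elim
  · exact heq
  · exact (not_two x hx hcont hq hp hlt).elim

end
end

section
/- Let x ∈ 𝔻, let τ ∈ (0,1] with S̃_Δ(x)(τ) > 0 and #Ã_τ(x) = 1, and let x_n ∈ 𝔻 be a sequence with ‖x_n − x‖ → 0. Then for all sufficiently large n one has Ã_τ(x_n) ≠ ∅ and R̃_τ(x_n) = L̃_τ(x_n) = R̃_τ(x) = L̃_τ(x). -/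
open Filter Topology Set unitInterval

noncomputable section

open scoped Classical

lemma Cadlag.bddAbs {x : I → ℝ} (hx : Cadlag x) : ∃ C, ∀ s, |x s| ≤ C := by
  have loc : ∀ a : I, ∃ C, ∀ᶠ s in 𝓝 a, |x s| ≤ C := by
    intro a
    obtain ⟨l, hl⟩ := hx.2 a
    refine ⟨max (|x a| + 1) (|l| + 1), ?_⟩
    have hr : ∀ᶠ s in 𝓝[>] a, |x s| ≤ max (|x a| + 1) (|l| + 1) := by
      filter_upwards [(hx.1 a).eventually (Metric.ball_mem_nhds (x a) one_pos)] with s hs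
      rw [Real.dist_eq] at hs
      have := abs_sub_abs_le_abs_sub (x s) (x a)
      exact le_max_of_le_left (by linarith)
    have hlft : ∀ᶠ s in 𝓝[<] a, |x s| ≤ max (|x a| + 1) (|l| + 1) := by
      filter_upwards [hl.eventually (Metric.ball_mem_nhds l one_pos)] with s hs
      rw [Real.dist_eq] at hs
      have := abs_sub_abs_le_abs_sub (x s) l
      exact le_max_of_le_right (by linarith)
    rw [← nhdsNE_sup_pure a, eventually_sup,
      ← nhdsLT_sup_nhdsGT a, eventually_sup]
    refine ⟨⟨hlft, hr⟩, ?_⟩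
    have : |x a| ≤ |x a| + 1 := by linarith
    simpa using le_max_of_le_left this
  choose C hC using loc
  obtain ⟨t, ht⟩ := isCompact_univ.elim_nhds_subcover (fun a => {s | |x s| ≤ C a})
    (fun a _ => hC a)
  have key : ∀ s : I, ∃ a ∈ t, |x s| ≤ C a := by
    intro s
    have := ht.2 (mem_univ s)
    simpa only [mem_iUnion, mem_setOf_eq, exists_prop] using this
  have htne : t.Nonempty := by
    obtain ⟨a, hat, -⟩ := key 0
    exact ⟨a, hat⟩
  refine ⟨t.sup' htne C, fun s => ?_⟩
  obtain ⟨a, hat, has⟩ := key s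
  exact le_trans has (Finset.le_sup' C hat)

lemma abs_le_dNorm_s16 {x : I → ℝ} {C : ℝ} (hC : ∀ s, |x s| ≤ C) (s : I) : |x s| ≤ dNorm x :=
  le_ciSup (f := fun τ => |x τ|) ⟨C, by rintro _ ⟨t, rfl⟩; exact hC t⟩ s

lemma Cadlag.tendsto_leftLim {x : I → ℝ} (hx : Cadlag x) {s : I} (hs : s ≠ 0) :
    Tendsto x (𝓝[<] s) (𝓝 (Function.leftLim x s)) := by
  obtain ⟨l, hl⟩ := hx.2 s
  have hne : 𝓝[<] s ≠ ⊥ := (nhdsWithin_Iio_self_neBot' ⟨0, lt_of_le_of_ne nonneg' (Ne.symm hs)⟩).ne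
  rwa [leftLim_eq_of_tendsto (h := ⟨hne⟩) hl]

lemma jump_close {x y : I → ℝ} (hx : Cadlag x) (hy : Cadlag y) {ε : ℝ}
    (h : ∀ t, |x t - y t| ≤ ε) (s : I) : |jump x s - jump y s| ≤ 2 * ε := by
  have hε0 : 0 ≤ ε := (abs_nonneg _).trans (h 0)
  rcases eq_or_ne s 0 with rfl | hs
  · simpa [jump] using by linarith
  haveI : (𝓝[<] s).NeBot := nhdsWithin_Iio_self_neBot' ⟨0, lt_of_le_of_ne nonneg' (Ne.symm hs)⟩
  have hL : |Function.leftLim x s - Function.leftLim y s| ≤ ε := by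
    have ht : Tendsto (fun t => |x t - y t|) (𝓝[<] s)
        (𝓝 |Function.leftLim x s - Function.leftLim y s|) :=
      ((hx.tendsto_leftLim hs).sub (hy.tendsto_leftLim hs)).abs
    exact le_of_tendsto ht (Eventually.of_forall h)
  have h1 := h s
  have e : jump x s - jump y s
      = (x s - y s) - (Function.leftLim x s - Function.leftLim y s) := by
    simp only [jump, if_neg hs]; ring
  rw [e]
  calc |(x s - y s) - (Function.leftLim x s - Function.leftLim y s)|
      ≤ |x s - y s| + |Function.leftLim x s - Function.leftLim y s| := abs_sub _ _
    _ ≤ 2 * ε := by linarith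

lemma jump_bdd {x : I → ℝ} (hx : Cadlag x) : ∃ C, ∀ s, |jump x s| ≤ C := by
  obtain ⟨C, hC⟩ := hx.bddAbs
  have hC0 : 0 ≤ C := (abs_nonneg _).trans (hC 0)
  refine ⟨2 * C, fun s => ?_⟩
  rcases eq_or_ne s 0 with rfl | hs
  · simpa [jump] using by linarith
  haveI : (𝓝[<] s).NeBot := nhdsWithin_Iio_self_neBot' ⟨0, lt_of_le_of_ne nonneg' (Ne.symm hs)⟩
  have hL : |Function.leftLim x s| ≤ C :=
    le_of_tendsto (hx.tendsto_leftLim hs).abs (Eventually.of_forall hC)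
  have := hC s
  calc |jump x s| = |x s - Function.leftLim x s| := by simp [jump, hs]
    _ ≤ |x s| + |Function.leftLim x s| := abs_sub _ _
    _ ≤ 2 * C := by linarith

lemma small_jumps_near {x : I → ℝ} (hx : Cadlag x) (a : I) {ε : ℝ} (hε : 0 < ε) :
    ∀ᶠ s in 𝓝 a, s = a ∨ |jump x s| < ε := by
  have hright : ∀ᶠ s in 𝓝[>] a, |jump x s| < ε := by
    rcases eq_or_ne (𝓝[>] a) ⊥ with hb | hb
    · simp [hb]
    have hne : (Ioi a).Nonempty := by
      rw [Set.nonempty_iff_ne_empty]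
      intro h0
      exact hb (by rw [nhdsWithin, h0, principal_empty, inf_bot_eq])
    obtain ⟨u', hu'⟩ := hne
    have hS : {t : I | |x t - x a| < ε / 3} ∈ 𝓝[>] a := by
      have := (hx.1 a).eventually (Metric.ball_mem_nhds (x a) (by linarith : (0:ℝ) < ε/3))
      filter_upwards [this] with t ht
      simpa [Real.dist_eq] using ht
    rw [mem_nhdsGT_iff_exists_Ioo_subset' hu'] at hS
    obtain ⟨u, hu, hsub⟩ := hS
    filter_upwards [Ioo_mem_nhdsGT_of_mem (⟨le_refl a, hu⟩ : a ∈ Ico a u)] with s hs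
    have hs0 : s ≠ 0 := ne_of_gt (lt_of_le_of_lt (nonneg' : 0 ≤ a) hs.1)
    haveI : (𝓝[<] s).NeBot := nhdsWithin_Iio_self_neBot' ⟨a, hs.1⟩
    have hxs : |x s - x a| < ε / 3 := hsub hs
    have hLev : ∀ᶠ t in 𝓝[<] s, |x t - x a| ≤ ε / 3 := by
      filter_upwards [Ioo_mem_nhdsLT_of_mem (⟨hs.1, hs.2.le⟩ : s ∈ Ioc a u)] with t ht
      exact (hsub ht).le
    have hL : |Function.leftLim x s - x a| ≤ ε / 3 :=
      le_of_tendsto ((hx.tendsto_leftLim hs0).sub_const (x a)).abs hLev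
    have e : jump x s = (x s - x a) - (Function.leftLim x s - x a) := by
      simp only [jump, if_neg hs0]; ring
    rw [e]
    calc |(x s - x a) - (Function.leftLim x s - x a)|
        ≤ |x s - x a| + |Function.leftLim x s - x a| := abs_sub _ _
      _ < ε := by linarith
  have hleft : ∀ᶠ s in 𝓝[<] a, |jump x s| < ε := by
    rcases eq_or_ne (𝓝[<] a) ⊥ with hb | hb
    · simp [hb]
    have hne : (Iio a).Nonempty := by
      rw [Set.nonempty_iff_ne_empty]
      intro h0
      exact hb (by rw [nhdsWithin, h0, principal_empty, inf_bot_eq])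
    obtain ⟨l', hl'⟩ := hne
    obtain ⟨la, hla⟩ := hx.2 a
    have hS : {t : I | |x t - la| < ε / 3} ∈ 𝓝[<] a := by
      have := hla.eventually (Metric.ball_mem_nhds la (by linarith : (0:ℝ) < ε/3))
      filter_upwards [this] with t ht
      simpa [Real.dist_eq] using ht
    rw [mem_nhdsLT_iff_exists_Ioo_subset' hl'] at hS
    obtain ⟨c, hc, hsub⟩ := hS
    filter_upwards [Ioo_mem_nhdsLT_of_mem (⟨hc, le_refl a⟩ : a ∈ Ioc c a)] with s hs
    have hs0 : s ≠ 0 := ne_of_gt (lt_of_le_of_lt (nonneg' : 0 ≤ c) hs.1)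
    haveI : (𝓝[<] s).NeBot := nhdsWithin_Iio_self_neBot' ⟨c, hs.1⟩
    have hxs : |x s - la| < ε / 3 := hsub hs
    have hLev : ∀ᶠ t in 𝓝[<] s, |x t - la| ≤ ε / 3 := by
      filter_upwards [Ioo_mem_nhdsLT_of_mem (⟨hs.1, hs.2.le⟩ : s ∈ Ioc c a)] with t ht
      exact (hsub ht).le
    have hL : |Function.leftLim x s - la| ≤ ε / 3 :=
      le_of_tendsto ((hx.tendsto_leftLim hs0).sub_const la).abs hLev
    have e : jump x s = (x s - la) - (Function.leftLim x s - la) := by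
      simp only [jump, if_neg hs0]; ring
    rw [e]
    calc |(x s - la) - (Function.leftLim x s - la)|
        ≤ |x s - la| + |Function.leftLim x s - la| := abs_sub _ _
      _ < ε := by linarith
  have h1 : ∀ᶠ s in 𝓝[≠] a, s = a ∨ |jump x s| < ε := by
    rw [← nhdsLT_sup_nhdsGT, eventually_sup]
    exact ⟨hleft.mono fun s h => Or.inr h, hright.mono fun s h => Or.inr h⟩
  rw [← nhdsNE_sup_pure, eventually_sup]
  exact ⟨h1, eventually_pure.2 (Or.inl rfl)⟩

lemma modJumpSup_bddAbove {x : I → ℝ} (hx : Cadlag x) (τ : I) :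
    BddAbove ((fun s => |jump x s|) '' {s : I | s ≤ τ}) := by
  obtain ⟨C, hC⟩ := jump_bdd hx
  exact ⟨C, by rintro _ ⟨s, -, rfl⟩; exact hC s⟩

lemma le_modJumpSup {x : I → ℝ} (hx : Cadlag x) {τ s : I} (hs : s ≤ τ) :
    |jump x s| ≤ modJumpSup x τ :=
  le_csSup (modJumpSup_bddAbove hx τ) ⟨s, hs, rfl⟩

lemma gap_lemma {x : I → ℝ} (hx : Cadlag x) {τ : I} {s₀ : I}
    (hA : tildeA x τ = {s₀}) (hS : 0 < modJumpSup x τ) :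
    ∃ δ > 0, ∀ s, s ≤ τ → s ≠ s₀ → |jump x s| ≤ modJumpSup x τ - δ := by
  set M := modJumpSup x τ with hM
  by_contra h
  push_neg at h
  have hseq : ∀ k : ℕ, ∃ s : I, s ≤ τ ∧ s ≠ s₀ ∧ M - 1 / (k + 1) < |jump x s| := by
    intro k
    obtain ⟨s, h1, h2, h3⟩ := h (1 / (k + 1)) (by positivity)
    exact ⟨s, h1, h2, h3⟩
  choose u hu1 hu2 hu3 using hseq
  obtain ⟨a, -, φ, hφ, hten⟩ := isCompact_univ.tendsto_subseq (fun n => mem_univ (u n))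
  have hsmall := hten.eventually (small_jumps_near hx a (half_pos hS))
  -- eventually 1/(φ k + 1) < M/2
  obtain ⟨K, hK⟩ := exists_nat_one_div_lt (half_pos hS)
  have heq : ∀ᶠ k in atTop, u (φ k) = a := by
    filter_upwards [hsmall, eventually_ge_atTop K] with k hk hkK
    rcases hk with hk | hk
    · exact hk
    · exfalso
      have h1 : 1 / ((φ k : ℝ) + 1) ≤ 1 / ((K : ℝ) + 1) := by
        apply one_div_le_one_div_of_le (by positivity)
        have : (K : ℝ) ≤ (φ k : ℝ) := by
          exact_mod_cast le_trans hkK (hφ.le_apply)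
        linarith
      have h2 := hu3 (φ k)
      rw [Function.comp] at hk
      linarith [hk, h1, hK]
  obtain ⟨N, hN⟩ := heq.exists_forall_of_atTop
  have ha_eq : u (φ N) = a := hN N le_rfl
  have haτ : a ≤ τ := ha_eq ▸ hu1 (φ N)
  have hja_le : |jump x a| ≤ M := le_modJumpSup hx haτ
  have hja_ge : M ≤ |jump x a| := by
    by_contra h'
    push_neg at h'
    obtain ⟨K', hK'⟩ := exists_nat_one_div_lt (by linarith : (0:ℝ) < M - |jump x a|)
    set k := max N K' with hk
    have h1 : u (φ k) = a := hN k (le_max_left _ _)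
    have h2 := hu3 (φ k)
    rw [h1] at h2
    have h3 : 1 / ((φ k : ℝ) + 1) ≤ 1 / ((K' : ℝ) + 1) := by
      apply one_div_le_one_div_of_le (by positivity)
      have : (K' : ℝ) ≤ (φ k : ℝ) := by
        exact_mod_cast le_trans (le_max_right N K') hφ.le_apply
      linarith
    linarith
  have hjaM : |jump x a| = M := le_antisymm hja_le hja_ge
  have ha0 : (0:I) < a := by
    rcases eq_or_ne a 0 with rfl | h0
    · exfalso; rw [show jump x 0 = 0 from if_pos rfl] at hjaM; simp at hjaM; linarith
    · exact lt_of_le_of_ne nonneg' (Ne.symm h0)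
  have hamem : a ∈ tildeA x τ := ⟨ha0, haτ, by rw [hjaM]; exact hS, hjaM⟩
  rw [hA, mem_singleton_iff] at hamem
  exact hu2 (φ N) (by rw [ha_eq, hamem])

/-- if `‖x_n - x‖ → 0`, `S̃_Δ(x)(τ) > 0` and `#Ã_τ(x) = 1`, then
eventually `Ã_τ(x_n) ≠ ∅` and `R̃_τ(x_n) = L̃_τ(x_n) = R̃_τ(x) = L̃_τ(x)`. -/
theorem stmt16 (x : I → ℝ) (hx : Cadlag x) (τ : I) (hτ : τ ≠ 0)
    (hS : 0 < modJumpSup x τ) (huniq : ∃ s : I, tildeA x τ = {s})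
    (xn : ℕ → I → ℝ) (hxn : ∀ n, Cadlag (xn n))
    (hconv : Tendsto (fun n => dNorm (fun s => xn n s - x s)) atTop (𝓝 0)) :
    ∀ᶠ n in atTop, (tildeA (xn n) τ).Nonempty ∧
      sInf (tildeA (xn n) τ) = sSup (tildeA (xn n) τ) ∧
      sInf (tildeA (xn n) τ) = sInf (tildeA x τ) ∧
      sInf (tildeA x τ) = sSup (tildeA x τ) := by
  obtain ⟨s₀, hA⟩ := huniq
  have hs₀mem : s₀ ∈ tildeA x τ := by rw [hA]; exact mem_singleton _
  obtain ⟨hs₀pos, hs₀τ, hs₀jpos, hs₀j⟩ := hs₀mem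
  obtain ⟨δ, hδ, hgap⟩ := gap_lemma hx hA hS
  set M := modJumpSup x τ with hM
  have hδM : δ ≤ M := by
    have h0 := hgap 0 nonneg' (ne_of_lt hs₀pos)
    rw [show jump x 0 = 0 from if_pos rfl] at h0
    simp at h0; linarith
  have hev : ∀ᶠ n in atTop, dNorm (fun s => xn n s - x s) < δ / 8 :=
    hconv.eventually_lt_const (by positivity)
  filter_upwards [hev] with n hn
  have hgn : Cadlag (fun s => xn n s - x s) := by
    constructor
    · intro t; exact ((hxn n).1 t).sub (hx.1 t)
    · intro t
      obtain ⟨l1, h1⟩ := (hxn n).2 t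
      obtain ⟨l2, h2⟩ := hx.2 t
      exact ⟨l1 - l2, h1.sub h2⟩
  obtain ⟨C, hC⟩ := hgn.bddAbs
  have hpt : ∀ s, |xn n s - x s| ≤ δ / 8 := fun s => (abs_le_dNorm_s16 hC s).trans hn.le
  have hjc : ∀ s, |jump (xn n) s - jump x s| ≤ δ / 4 := by
    intro s
    have := jump_close (hxn n) hx hpt s
    linarith
  have key1 : M - δ / 4 ≤ |jump (xn n) s₀| := by
    have h1 := hjc s₀
    have h2 := abs_sub_abs_le_abs_sub (jump x s₀) (jump (xn n) s₀)
    rw [hs₀j, abs_sub_comm] at h2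
    linarith
  have key2 : ∀ s, s ≤ τ → s ≠ s₀ → |jump (xn n) s| ≤ M - 3 * δ / 4 := by
    intro s h1 h2
    have h3 := hjc s
    have h4 := hgap s h1 h2
    have h5 := abs_sub_abs_le_abs_sub (jump (xn n) s) (jump x s)
    linarith
  have hgr : IsGreatest ((fun s => |jump (xn n) s|) '' {s : I | s ≤ τ})
      (|jump (xn n) s₀|) := by
    constructor
    · exact ⟨s₀, hs₀τ, rfl⟩
    · rintro _ ⟨s, hs, rfl⟩
      rcases eq_or_ne s s₀ with rfl | hne
      · exact le_rfl
      · have := key2 s hs hne; linarith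
  have hMn : modJumpSup (xn n) τ = |jump (xn n) s₀| := hgr.csSup_eq
  have hAn : tildeA (xn n) τ = {s₀} := by
    ext s
    simp only [tildeA, mem_setOf_eq, mem_singleton_iff]
    constructor
    · rintro ⟨h1, h2, h3, h4⟩
      by_contra hne
      have h5 := key2 s h2 hne
      rw [h4, hMn] at h5
      linarith [key1]
    · rintro rfl
      exact ⟨hs₀pos, hs₀τ, by linarith [key1], hMn.symm⟩
  refine ⟨⟨s₀, by rw [hAn]; exact mem_singleton _⟩, ?_, ?_, ?_⟩ <;>
    simp [hAn, hA]


end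
end
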